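/- arXiv:math/0501017 — 5 statements merged into one kernel-verified Lean document; each statement's English description precedes it below -/
import Mathlib

section
/- Let U ⊆ ℝ² be an open set and let h₁, h₂ : ℝ² → ℝ be twice continuously differentiable on U. Define H : ℝ² → ℝ by H(x) = (exp(h₁(x)) + exp(h₂(x)))/2. Then for every x ∈ U, the Laplacian of log H satisfies Δ(log H)(x) ≥ (exp(h₁(x))·Δh₁(x) + exp(h₂(x))·Δh₂(x)) / (2·H(x)). -/
open Real

/-- The Laplacian of a function on the Euclidean plane: the sum of the
second partial derivatives, i.e. the trace of the second derivative. -/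
noncomputable def laplacian (f : EuclideanSpace ℝ (Fin 2) → ℝ)
    (x : EuclideanSpace ℝ (Fin 2)) : ℝ :=
  ∑ i : Fin 2, iteratedFDeriv ℝ 2 f x
    ![EuclideanSpace.single i 1, EuclideanSpace.single i 1]

lemma aux_ineq (A B p q R S : ℝ) (hA : 0 < A) (hB : 0 < B) :
    (A * R + B * S) / (A + B) ≤
      ((A + B) / 2)⁻¹ * ((A / 2) * R + ((A / 2) * p) * p + (B / 2) * S + ((B / 2) * q) * q)
        + (-(((A + B) / 2) ^ 2)⁻¹ * ((A / 2) * p + (B / 2) * q)) *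
            ((A / 2) * p + (B / 2) * q) := by
  have hAB : (0:ℝ) < A + B := by positivity
  have key : ((A + B) / 2)⁻¹ * ((A / 2) * R + ((A / 2) * p) * p + (B / 2) * S + ((B / 2) * q) * q)
        + (-(((A + B) / 2) ^ 2)⁻¹ * ((A / 2) * p + (B / 2) * q)) *
            ((A / 2) * p + (B / 2) * q)
      = (A * R + B * S) / (A + B)
        + (A * B * (p - q) ^ 2) / (A + B) ^ 2 := by
    field_simp
    ring
  rw [key]
  have h0 : 0 ≤ (A * B * (p - q) ^ 2) / (A + B) ^ 2 := by positivity
  linarith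

set_option maxHeartbeats 1000000 in
theorem laplacian_log_avg_exp_ge
    (U : Set (EuclideanSpace ℝ (Fin 2))) (hU : IsOpen U)
    (h₁ h₂ : EuclideanSpace ℝ (Fin 2) → ℝ)
    (hh₁ : ContDiffOn ℝ 2 h₁ U) (hh₂ : ContDiffOn ℝ 2 h₂ U)
    (H : EuclideanSpace ℝ (Fin 2) → ℝ)
    (hH : ∀ x, H x = (Real.exp (h₁ x) + Real.exp (h₂ x)) / 2) :
    ∀ x ∈ U, laplacian (fun y => Real.log (H y)) x ≥
      (Real.exp (h₁ x) * laplacian h₁ x + Real.exp (h₂ x) * laplacian h₂ x)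
        / (2 * H x) := by
  have hHfun : H = fun y => (Real.exp (h₁ y) + Real.exp (h₂ y)) / 2 := funext hH
  subst hHfun
  intro x hx
  have hUx : U ∈ nhds x := hU.mem_nhds hx
  -- first derivatives on U
  have hd₁ : ∀ y ∈ U, HasFDerivAt h₁ (fderiv ℝ h₁ y) y := fun y hy =>
    ((hh₁.contDiffAt (hU.mem_nhds hy)).differentiableAt (by norm_num)).hasFDerivAt
  have hd₂ : ∀ y ∈ U, HasFDerivAt h₂ (fderiv ℝ h₂ y) y := fun y hy =>
    ((hh₂.contDiffAt (hU.mem_nhds hy)).differentiableAt (by norm_num)).hasFDerivAt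
  have Hpos : ∀ y, 0 < (Real.exp (h₁ y) + Real.exp (h₂ y)) / 2 := fun y => by positivity
  -- derivative of H
  set D : EuclideanSpace ℝ (Fin 2) → (EuclideanSpace ℝ (Fin 2) →L[ℝ] ℝ) :=
    fun y => (Real.exp (h₁ y) / 2) • fderiv ℝ h₁ y + (Real.exp (h₂ y) / 2) • fderiv ℝ h₂ y
    with hD_def
  have hHd : ∀ y ∈ U,
      HasFDerivAt (fun z => (Real.exp (h₁ z) + Real.exp (h₂ z)) / 2) (D y) y := by
    intro y hy
    have h := (((hd₁ y hy).exp).add ((hd₂ y hy).exp)).const_mul (2 : ℝ)⁻¹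
    simp only [div_eq_inv_mul]
    convert h using 1 <;> try rfl
    ext v
    simp [hD_def]
    ring
  -- derivative of log H
  set G : EuclideanSpace ℝ (Fin 2) → (EuclideanSpace ℝ (Fin 2) →L[ℝ] ℝ) :=
    fun y => ((Real.exp (h₁ y) + Real.exp (h₂ y)) / 2)⁻¹ • D y with hG_def
  have hlog : ∀ y ∈ U,
      HasFDerivAt (fun z => Real.log ((Real.exp (h₁ z) + Real.exp (h₂ z)) / 2)) (G y) y :=
    fun y hy => (hHd y hy).log (Hpos y).ne'
  have hev : fderiv ℝ (fun z => Real.log ((Real.exp (h₁ z) + Real.exp (h₂ z)) / 2))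
      =ᶠ[nhds x] G :=
    Filter.eventually_of_mem hUx fun y hy => (hlog y hy).fderiv
  -- second derivatives of h₁, h₂ at x
  have hB₁ : HasFDerivAt (fderiv ℝ h₁) (fderiv ℝ (fderiv ℝ h₁) x) x := by
    have := (hh₁.contDiffAt hUx).fderiv_right (m := 1) (le_refl _)
    exact (this.differentiableAt one_ne_zero).hasFDerivAt
  have hB₂ : HasFDerivAt (fderiv ℝ h₂) (fderiv ℝ (fderiv ℝ h₂) x) x := by
    have := (hh₂.contDiffAt hUx).fderiv_right (m := 1) (le_refl _)
    exact (this.differentiableAt one_ne_zero).hasFDerivAt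
  -- coefficient functions
  have hc₁ : HasFDerivAt (fun y => Real.exp (h₁ y) / 2)
      ((Real.exp (h₁ x) / 2) • fderiv ℝ h₁ x) x := by
    have h := ((hd₁ x hx).exp).const_mul (2 : ℝ)⁻¹
    simp only [div_eq_inv_mul]
    convert h using 1 <;> try rfl
    ext v; simp; ring
  have hc₂ : HasFDerivAt (fun y => Real.exp (h₂ y) / 2)
      ((Real.exp (h₂ x) / 2) • fderiv ℝ h₂ x) x := by
    have h := ((hd₂ x hx).exp).const_mul (2 : ℝ)⁻¹
    simp only [div_eq_inv_mul]
    convert h using 1 <;> try rfl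
    ext v; simp; ring
  -- derivative of D at x
  have hDd : HasFDerivAt D
      (((Real.exp (h₁ x) / 2) • fderiv ℝ (fderiv ℝ h₁) x +
          ((Real.exp (h₁ x) / 2) • fderiv ℝ h₁ x).smulRight (fderiv ℝ h₁ x)) +
        ((Real.exp (h₂ x) / 2) • fderiv ℝ (fderiv ℝ h₂) x +
          ((Real.exp (h₂ x) / 2) • fderiv ℝ h₂ x).smulRight (fderiv ℝ h₂ x))) x :=
    (hc₁.smul hB₁).add (hc₂.smul hB₂)
  -- derivative of the inverse of H at x
  have hinv : HasFDerivAt (fun y => ((Real.exp (h₁ y) + Real.exp (h₂ y)) / 2)⁻¹)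
      ((-(((Real.exp (h₁ x) + Real.exp (h₂ x)) / 2) ^ 2)⁻¹) • D x) x :=
    (hasDerivAt_inv (Hpos x).ne').comp_hasFDerivAt x (hHd x hx)
  -- derivative of G at x
  have hGd : HasFDerivAt G
      (((Real.exp (h₁ x) + Real.exp (h₂ x)) / 2)⁻¹ •
          (((Real.exp (h₁ x) / 2) • fderiv ℝ (fderiv ℝ h₁) x +
              ((Real.exp (h₁ x) / 2) • fderiv ℝ h₁ x).smulRight (fderiv ℝ h₁ x)) +
            ((Real.exp (h₂ x) / 2) • fderiv ℝ (fderiv ℝ h₂) x +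
              ((Real.exp (h₂ x) / 2) • fderiv ℝ h₂ x).smulRight (fderiv ℝ h₂ x))) +
        ((-(((Real.exp (h₁ x) + Real.exp (h₂ x)) / 2) ^ 2)⁻¹) • D x).smulRight (D x)) x :=
    hinv.smul hDd
  have key : fderiv ℝ (fderiv ℝ (fun z => Real.log ((Real.exp (h₁ z) + Real.exp (h₂ z)) / 2))) x
      = (((Real.exp (h₁ x) + Real.exp (h₂ x)) / 2)⁻¹ •
          (((Real.exp (h₁ x) / 2) • fderiv ℝ (fderiv ℝ h₁) x +
              ((Real.exp (h₁ x) / 2) • fderiv ℝ h₁ x).smulRight (fderiv ℝ h₁ x)) +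
            ((Real.exp (h₂ x) / 2) • fderiv ℝ (fderiv ℝ h₂) x +
              ((Real.exp (h₂ x) / 2) • fderiv ℝ h₂ x).smulRight (fderiv ℝ h₂ x))) +
        ((-(((Real.exp (h₁ x) + Real.exp (h₂ x)) / 2) ^ 2)⁻¹) • D x).smulRight (D x)) := by
    rw [hev.fderiv_eq]
    exact hGd.fderiv
  -- rewrite the laplacians
  simp only [laplacian, iteratedFDeriv_two_apply, Matrix.cons_val_zero, Matrix.cons_val_one,
    Matrix.head_cons]
  rw [key]
  -- abbreviations
  set A := Real.exp (h₁ x) with hA_def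
  set B := Real.exp (h₂ x) with hB_def
  have hA : 0 < A := Real.exp_pos _
  have hB : 0 < B := Real.exp_pos _
  have expand : ∀ i : Fin 2,
      (((A + B) / 2)⁻¹ •
          (((A / 2) • fderiv ℝ (fderiv ℝ h₁) x +
              ((A / 2) • fderiv ℝ h₁ x).smulRight (fderiv ℝ h₁ x)) +
            ((B / 2) • fderiv ℝ (fderiv ℝ h₂) x +
              ((B / 2) • fderiv ℝ h₂ x).smulRight (fderiv ℝ h₂ x))) +
        ((-(((A + B) / 2) ^ 2)⁻¹) • D x).smulRight (D x))
        (EuclideanSpace.single i 1) (EuclideanSpace.single i 1)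
      = ((A + B) / 2)⁻¹ *
          ((A / 2) * fderiv ℝ (fderiv ℝ h₁) x (EuclideanSpace.single i 1) (EuclideanSpace.single i 1)
            + ((A / 2) * fderiv ℝ h₁ x (EuclideanSpace.single i 1)) * fderiv ℝ h₁ x (EuclideanSpace.single i 1)
            + (B / 2) * fderiv ℝ (fderiv ℝ h₂) x (EuclideanSpace.single i 1) (EuclideanSpace.single i 1)
            + ((B / 2) * fderiv ℝ h₂ x (EuclideanSpace.single i 1)) * fderiv ℝ h₂ x (EuclideanSpace.single i 1))
        + (-(((A + B) / 2) ^ 2)⁻¹ *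
            ((A / 2) * fderiv ℝ h₁ x (EuclideanSpace.single i 1)
              + (B / 2) * fderiv ℝ h₂ x (EuclideanSpace.single i 1))) *
            ((A / 2) * fderiv ℝ h₁ x (EuclideanSpace.single i 1)
              + (B / 2) * fderiv ℝ h₂ x (EuclideanSpace.single i 1)) := by
    intro i
    simp [hD_def, ContinuousLinearMap.smulRight_apply, mul_comm]
    ring
  rw [ge_iff_le]
  have hden : 2 * ((A + B) / 2) = A + B := by ring
  rw [hden, Finset.mul_sum, Finset.mul_sum, ← Finset.sum_add_distrib, Finset.sum_div]
  exact Finset.sum_le_sum fun i _ => by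
    rw [expand i]
    exact aux_ineq A B _ _ _ _ hA hB
end

section
/- Let U ⊆ ℝ² be an open set and let h₁, h₂ : ℝ² → ℝ be twice continuously differentiable on U, and suppose Δh₁(x) ≥ 0 and Δh₂(x) ≥ 0 for all x ∈ U. Then the function log((exp ∘ h₁ + exp ∘ h₂)/2) has nonnegative Laplacian at every point of U; that is, the logarithm of the average of exponentials of subharmonic functions is subharmonic. -/
open Real

/-- 1D core lemma. -/
lemma oneD (a b : ℝ → ℝ) (s : Set ℝ) (hs : IsOpen s) (h0 : (0:ℝ) ∈ s)
    (ha : ContDiffOn ℝ 2 a s) (hb : ContDiffOn ℝ 2 b s) :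
    (Real.exp (a 0) * deriv (deriv a) 0 + Real.exp (b 0) * deriv (deriv b) 0)
      / (Real.exp (a 0) + Real.exp (b 0))
      ≤ deriv (deriv (fun t => Real.log ((Real.exp (a t) + Real.exp (b t)) / 2))) 0 := by
  have hda : ∀ t ∈ s, HasDerivAt a (deriv a t) t := fun t ht =>
    ((ha.differentiableOn two_ne_zero).differentiableAt (hs.mem_nhds ht)).hasDerivAt
  have hdb : ∀ t ∈ s, HasDerivAt b (deriv b t) t := fun t ht =>
    ((hb.differentiableOn two_ne_zero).differentiableAt (hs.mem_nhds ht)).hasDerivAt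
  set ψ : ℝ → ℝ := fun t =>
    (Real.exp (a t) * deriv a t + Real.exp (b t) * deriv b t)
      / (Real.exp (a t) + Real.exp (b t)) with hψ
  have hφ' : ∀ t ∈ s,
      HasDerivAt (fun t => Real.log ((Real.exp (a t) + Real.exp (b t)) / 2)) (ψ t) t := by
    intro t ht
    have hin : HasDerivAt (fun t => (Real.exp (a t) + Real.exp (b t)) / 2)
        ((Real.exp (a t) * deriv a t + Real.exp (b t) * deriv b t) / 2) t :=
      (((hda t ht).exp).add ((hdb t ht).exp)).div_const 2
    have hne : (Real.exp (a t) + Real.exp (b t)) / 2 ≠ 0 := by positivity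
    have := hin.log hne
    convert this using 1
    rw [hψ]
    field_simp
  have heq : deriv (deriv (fun t => Real.log ((Real.exp (a t) + Real.exp (b t)) / 2))) 0
      = deriv ψ 0 := by
    apply Filter.EventuallyEq.deriv_eq
    filter_upwards [hs.mem_nhds h0] with t ht using (hφ' t ht).deriv
  rw [heq]
  -- now compute deriv ψ 0
  have hda' : HasDerivAt (deriv a) (deriv (deriv a) 0) 0 :=
    (((ha.deriv_of_isOpen hs le_rfl).differentiableOn
      one_ne_zero).differentiableAt (hs.mem_nhds h0)).hasDerivAt
  have hdb' : HasDerivAt (deriv b) (deriv (deriv b) 0) 0 :=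
    (((hb.deriv_of_isOpen hs le_rfl).differentiableOn
      one_ne_zero).differentiableAt (hs.mem_nhds h0)).hasDerivAt
  set p := Real.exp (a 0) with hp
  set q := Real.exp (b 0) with hq
  set a1 := deriv a 0
  set b1 := deriv b 0
  set a2 := deriv (deriv a) 0
  set b2 := deriv (deriv b) 0
  have hNum : HasDerivAt (fun t => Real.exp (a t) * deriv a t + Real.exp (b t) * deriv b t)
      ((p * a1 * a1 + p * a2) + (q * b1 * b1 + q * b2)) 0 :=
    ((((hda 0 h0).exp).mul hda').add (((hdb 0 h0).exp).mul hdb'))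
  have hDen : HasDerivAt (fun t => Real.exp (a t) + Real.exp (b t)) (p * a1 + q * b1) 0 :=
    ((hda 0 h0).exp).add ((hdb 0 h0).exp)
  have hpq : (0:ℝ) < p + q := by positivity
  have hψ' : HasDerivAt ψ
      ((((p * a1 * a1 + p * a2) + (q * b1 * b1 + q * b2)) * (p + q)
        - (p * a1 + q * b1) * (p * a1 + q * b1)) / (p + q) ^ 2) 0 :=
    hNum.div hDen (ne_of_gt hpq)
  rw [hψ'.deriv]
  rw [div_le_div_iff₀ hpq (by positivity)]
  have hppos : (0:ℝ) < p := Real.exp_pos _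
  have hqpos : (0:ℝ) < q := Real.exp_pos _
  nlinarith [mul_nonneg (mul_nonneg (mul_pos hppos hqpos).le (sq_nonneg (a1 - b1))) hpq.le]

/-- Bridge: second directional derivative along a line. -/
lemma bridge (f : EuclideanSpace ℝ (Fin 2) → ℝ) (U : Set (EuclideanSpace ℝ (Fin 2)))
    (hU : IsOpen U) (hf : ContDiffOn ℝ 2 f U) (x : EuclideanSpace ℝ (Fin 2)) (hx : x ∈ U)
    (v : EuclideanSpace ℝ (Fin 2)) :
    iteratedFDeriv ℝ 2 f x ![v, v] = deriv (deriv (fun t : ℝ => f (x + t • v))) 0 := by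
  have hline : ∀ t : ℝ, HasDerivAt (fun t : ℝ => x + t • v) v t := by
    intro t
    simpa using ((hasDerivAt_id t).smul_const v).const_add x
  set s : Set ℝ := (fun t : ℝ => x + t • v) ⁻¹' U with hsdef
  have hcont : Continuous (fun t : ℝ => x + t • v) := by continuity
  have hs : IsOpen s := hU.preimage hcont
  have h0 : (0:ℝ) ∈ s := by simp [hsdef, hx]
  have hdg : ∀ t ∈ s, HasDerivAt (fun t : ℝ => f (x + t • v))
      (fderiv ℝ f (x + t • v) v) t := by
    intro t ht
    exact (((hf.differentiableOn two_ne_zero).differentiableAt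
      (hU.mem_nhds ht)).hasFDerivAt).comp_hasDerivAt t (hline t)
  have heq : deriv (deriv (fun t : ℝ => f (x + t • v))) 0
      = deriv (fun t : ℝ => fderiv ℝ f (x + t • v) v) 0 := by
    apply Filter.EventuallyEq.deriv_eq
    filter_upwards [hs.mem_nhds h0] with t ht using (hdg t ht).deriv
  rw [heq]
  have hf' : HasFDerivAt (fderiv ℝ f) (fderiv ℝ (fderiv ℝ f) x) x :=
    (((hf.fderiv_of_isOpen hU le_rfl).differentiableOn
      one_ne_zero).differentiableAt (hU.mem_nhds hx)).hasFDerivAt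
  have hf'0 : HasFDerivAt (fderiv ℝ f) (fderiv ℝ (fderiv ℝ f) x) (x + (0:ℝ) • v) := by
    simpa using hf'
  have hc : HasDerivAt (fun t : ℝ => fderiv ℝ f (x + t • v))
      (fderiv ℝ (fderiv ℝ f) x v) 0 := hf'0.comp_hasDerivAt 0 (hline 0)
  have happ : HasDerivAt (fun t : ℝ => fderiv ℝ f (x + t • v) v)
      (fderiv ℝ (fderiv ℝ f) x v v + fderiv ℝ f (x + (0:ℝ) • v) 0) 0 :=
    hc.clm_apply (hasDerivAt_const 0 v)
  rw [happ.deriv, iteratedFDeriv_two_apply]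
  simp

theorem log_avg_exp_subharmonic
    (U : Set (EuclideanSpace ℝ (Fin 2))) (hU : IsOpen U)
    (h₁ h₂ : EuclideanSpace ℝ (Fin 2) → ℝ)
    (hh₁ : ContDiffOn ℝ 2 h₁ U) (hh₂ : ContDiffOn ℝ 2 h₂ U)
    (hsub₁ : ∀ x ∈ U, 0 ≤ laplacian h₁ x)
    (hsub₂ : ∀ x ∈ U, 0 ≤ laplacian h₂ x) :
    ∀ x ∈ U,
      0 ≤ laplacian (fun y => Real.log ((Real.exp (h₁ y) + Real.exp (h₂ y)) / 2)) x := by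
  intro x hx
  set F : EuclideanSpace ℝ (Fin 2) → ℝ :=
    fun y => Real.log ((Real.exp (h₁ y) + Real.exp (h₂ y)) / 2) with hF
  have hFc : ContDiffOn ℝ 2 F U := by
    apply ContDiffOn.log
    · exact ((Real.contDiff_exp.comp_contDiffOn hh₁).add
        (Real.contDiff_exp.comp_contDiffOn hh₂)).div_const 2
    · intro y hy; positivity
  set p := Real.exp (h₁ x) with hp
  set q := Real.exp (h₂ x) with hq
  have key : ∀ i : Fin 2,
      (p * iteratedFDeriv ℝ 2 h₁ x ![EuclideanSpace.single i 1, EuclideanSpace.single i 1]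
        + q * iteratedFDeriv ℝ 2 h₂ x ![EuclideanSpace.single i 1, EuclideanSpace.single i 1])
        / (p + q)
      ≤ iteratedFDeriv ℝ 2 F x ![EuclideanSpace.single i 1, EuclideanSpace.single i 1] := by
    intro i
    set v := EuclideanSpace.single i (1:ℝ) with hv
    have hcont : Continuous (fun t : ℝ => x + t • v) := by continuity
    set s : Set ℝ := (fun t : ℝ => x + t • v) ⁻¹' U with hsdef
    have hs : IsOpen s := hU.preimage hcont
    have h0 : (0:ℝ) ∈ s := by simp [hsdef, hx]
    have hlc : ContDiffOn ℝ 2 (fun t : ℝ => x + t • v) s :=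
      (contDiff_const.add (contDiff_id.smul contDiff_const)).contDiffOn
    have ha : ContDiffOn ℝ 2 (fun t : ℝ => h₁ (x + t • v)) s :=
      hh₁.comp hlc (fun t ht => ht)
    have hb : ContDiffOn ℝ 2 (fun t : ℝ => h₂ (x + t • v)) s :=
      hh₂.comp hlc (fun t ht => ht)
    have h1 := oneD _ _ s hs h0 ha hb
    have e1 : iteratedFDeriv ℝ 2 h₁ x ![v, v] = deriv (deriv (fun t : ℝ => h₁ (x + t • v))) 0 :=
      bridge h₁ U hU hh₁ x hx v
    have e2 : iteratedFDeriv ℝ 2 h₂ x ![v, v] = deriv (deriv (fun t : ℝ => h₂ (x + t • v))) 0 :=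
      bridge h₂ U hU hh₂ x hx v
    have eF : iteratedFDeriv ℝ 2 F x ![v, v] = deriv (deriv (fun t : ℝ => F (x + t • v))) 0 :=
      bridge F U hU hFc x hx v
    rw [e1, e2, eF]
    simpa [hp, hq, hF] using h1
  have H1 := hsub₁ x hx
  have H2 := hsub₂ x hx
  simp only [laplacian] at H1 H2 ⊢
  refine le_trans ?_ (Finset.sum_le_sum (fun i _ => key i))
  rw [← Finset.sum_div, Finset.sum_add_distrib, ← Finset.mul_sum, ← Finset.mul_sum]
  have hppos : (0:ℝ) < p := Real.exp_pos _
  have hqpos : (0:ℝ) < q := Real.exp_pos _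
  apply div_nonneg _ (by positivity)
  exact add_nonneg (mul_nonneg hppos.le H1) (mul_nonneg hqpos.le H2)
end

section
/- The function x ↦ x · tan(π/x) is strictly decreasing on the open interval (2, ∞); that is, for all real numbers 2 < x < y one has y · tan(π/y) < x · tan(π/x). -/
open Real

lemma aux_deriv_neg (x : ℝ) (hx : 2 < x) :
    HasDerivAt (fun x : ℝ => x * Real.tan (π / x))
      (Real.tan (π / x) + x * (1 / Real.cos (π / x) ^ 2 * (-π / x ^ 2))) x := by
  have hx0 : x ≠ 0 := by positivity
  have h1 : HasDerivAt (fun x : ℝ => π / x) (-π / x ^ 2) x := by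
    have := (hasDerivAt_inv hx0).const_mul π
    simpa [div_eq_mul_inv, neg_div, mul_comm] using this
  have hcos : Real.cos (π / x) ≠ 0 := by
    have h2 : 0 < π / x := by positivity
    have h3 : π / x < π / 2 := by
      apply div_lt_div_of_pos_left Real.pi_pos (by norm_num) hx
    exact (Real.cos_pos_of_mem_Ioo ⟨by linarith, h3⟩).ne'
  have h2 : HasDerivAt (fun x : ℝ => Real.tan (π / x))
      (1 / Real.cos (π / x) ^ 2 * (-π / x ^ 2)) x :=
    (Real.hasDerivAt_tan hcos).comp x h1
  simpa [Pi.mul_def] using (hasDerivAt_id x).mul h2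

lemma aux_neg (x : ℝ) (hx : 2 < x) :
    Real.tan (π / x) + x * (1 / Real.cos (π / x) ^ 2 * (-π / x ^ 2)) < 0 := by
  set t := π / x with ht
  have hx0 : (0:ℝ) < x := by linarith
  have ht0 : 0 < t := by positivity
  have htlt : t < π / 2 := div_lt_div_of_pos_left Real.pi_pos (by norm_num) hx
  have hcos : 0 < Real.cos t := Real.cos_pos_of_mem_Ioo ⟨by linarith, htlt⟩
  have hkey : Real.sin t * Real.cos t < t := by
    have := Real.sin_lt (x := 2 * t) (by linarith)
    have h2 : Real.sin (2 * t) = 2 * Real.sin t * Real.cos t := Real.sin_two_mul t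
    nlinarith
  have htan : Real.tan t = Real.sin t / Real.cos t := Real.tan_eq_sin_div_cos t
  have hxt : x * (π / x ^ 2) = t := by rw [ht]; field_simp
  have : x * (1 / Real.cos t ^ 2 * (-π / x ^ 2)) = -(t / Real.cos t ^ 2) := by
    rw [← hxt]; field_simp
  rw [this, htan]
  have h4 : Real.sin t / Real.cos t < t / Real.cos t ^ 2 := by
    rw [div_lt_div_iff₀ hcos (by positivity)]
    nlinarith
  linarith

theorem strictAntiOn_mul_tan_pi_div :
    StrictAntiOn (fun x : ℝ => x * Real.tan (π / x)) (Set.Ioi 2) := by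
  have h := strictAntiOn_of_deriv_neg (convex_Ioi (2:ℝ))
    (f := fun x : ℝ => x * Real.tan (π / x)) ?_ ?_
  · exact h
  · intro x hx
    exact (aux_deriv_neg x hx).continuousAt.continuousWithinAt
  · intro x hx
    rw [interior_Ioi] at hx
    rw [(aux_deriv_neg x hx).deriv]
    exact aux_neg x hx
end

section
/- Let k be a natural number and let θ : Fin k → ℝ satisfy π/4 ≤ θ(i) < π for every i and ∑ᵢ θ(i) = 2π. Then ∑ᵢ tan(θ(i)/2) ≥ 8 · tan(π/8). -/
open Real Finset

lemma tangent_line_tan {x : ℝ} (hx1 : π/8 ≤ x) (hx2 : x < π/2) :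
    Real.tan (π/8) + (x - π/8) * (1 + Real.tan (π/8)^2) ≤ Real.tan x := by
  have hpi := Real.pi_pos
  set a : ℝ := π/8 with ha
  set d : ℝ := x - a with hd
  have hd0 : 0 ≤ d := by simp [hd]; linarith
  have hd2 : d < π/2 := by rw [hd]; linarith
  have hca : 0 < Real.cos a := Real.cos_pos_of_mem_Ioo ⟨by linarith, by linarith⟩
  have hcx : 0 < Real.cos x := Real.cos_pos_of_mem_Ioo ⟨by linarith, hx2⟩
  have hcd : 0 < Real.cos d := Real.cos_pos_of_mem_Ioo ⟨by linarith, hd2⟩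
  have hsa : 0 < Real.sin a := Real.sin_pos_of_pos_of_lt_pi (by linarith) (by linarith)
  have hsd : 0 ≤ Real.sin d := Real.sin_nonneg_of_nonneg_of_le_pi hd0 (by linarith)
  have htd : d ≤ Real.tan d := Real.le_tan hd0 hd2
  have hsdd : d * Real.cos d ≤ Real.sin d := by
    rw [Real.tan_eq_sin_div_cos] at htd
    calc d * Real.cos d ≤ (Real.sin d / Real.cos d) * Real.cos d := by nlinarith
      _ = Real.sin d := by field_simp
  have hcxe : Real.cos x = Real.cos a * Real.cos d - Real.sin a * Real.sin d := by
    rw [show x = a + d by rw [hd]; ring, Real.cos_add]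
  have key : d * Real.cos x ≤ Real.sin d * Real.cos a := by
    nlinarith [mul_nonneg (mul_nonneg hd0 hsa.le) hsd,
      mul_le_mul_of_nonneg_right hsdd hca.le]
  have hsub : Real.sin d = Real.sin x * Real.cos a - Real.cos x * Real.sin a := by
    rw [hd, Real.sin_sub]
  rw [Real.tan_eq_sin_div_cos, Real.tan_eq_sin_div_cos]
  rw [div_add' _ _ _ (ne_of_gt hca), div_le_div_iff₀ hca hcx]
  have h2 : (Real.sin a + d * (1 + (Real.sin a / Real.cos a)^2) * Real.cos a) * Real.cos a
      = Real.sin a * Real.cos a + d * (Real.sin a ^ 2 + Real.cos a ^ 2) := by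
    field_simp; ring
  rw [Real.sin_sq_add_cos_sq] at h2
  nlinarith [mul_pos hca hcx, mul_le_mul_of_nonneg_right key hca.le]

lemma tan_pi_div_eight_le : Real.tan (π/8) ≤ (π/8) * (1 + Real.tan (π/8)^2) := by
  have hpi := Real.pi_pos
  have hca : 0 < Real.cos (π/8) := Real.cos_pos_of_mem_Ioo ⟨by linarith, by linarith⟩
  have h4 : Real.sin (π/4) ≤ π/4 := Real.sin_le (by linarith)
  have h2 : Real.sin (π/4) = 2 * Real.sin (π/8) * Real.cos (π/8) := by
    rw [show (π/4 : ℝ) = 2 * (π/8) by ring, Real.sin_two_mul]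
  have h1 : Real.sin (π/8) ^ 2 + Real.cos (π/8) ^ 2 = 1 := Real.sin_sq_add_cos_sq _
  rw [Real.tan_eq_sin_div_cos]
  rw [div_le_iff₀ hca] at *
  · have := mul_pos hca hca
    have hexp : (π/8) * (1 + (Real.sin (π/8) / Real.cos (π/8))^2) * Real.cos (π/8) ^ 2
        = (π/8) * (Real.cos (π/8) ^ 2 + Real.sin (π/8) ^ 2) := by field_simp
    nlinarith [sq_nonneg (Real.cos (π/8))]

theorem sum_tan_half_ge_eight_tan_pi_div_eight (k : ℕ) (θ : Fin k → ℝ)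
    (hθ : ∀ i, π / 4 ≤ θ i ∧ θ i < π) (hsum : ∑ i, θ i = 2 * π) :
    ∑ i, Real.tan (θ i / 2) ≥ 8 * Real.tan (π / 8) := by
  have hpi := Real.pi_pos
  set t : ℝ := Real.tan (π/8) with ht
  have hk : (k : ℝ) ≤ 8 := by
    have h : (k : ℝ) * (π/4) ≤ ∑ i, θ i := by
      calc (k : ℝ) * (π/4)
          = ∑ _i : Fin k, (π/4 : ℝ) := by
            rw [Finset.sum_const, Finset.card_univ, Fintype.card_fin, nsmul_eq_mul]
        _ ≤ ∑ i, θ i := Finset.sum_le_sum fun i _ => (hθ i).1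
    rw [hsum] at h
    nlinarith
  have hlb : ∀ i, t + (θ i / 2 - π/8) * (1 + t^2) ≤ Real.tan (θ i / 2) := by
    intro i
    exact tangent_line_tan (by linarith [(hθ i).1]) (by linarith [(hθ i).2])
  have hsum2 : ∑ i, (θ i / 2) = π := by
    rw [← Finset.sum_div, hsum]; ring
  have hS : (k : ℝ) * t + (π - (k : ℝ) * (π/8)) * (1 + t^2) ≤ ∑ i, Real.tan (θ i / 2) := by
    calc (k : ℝ) * t + (π - (k : ℝ) * (π/8)) * (1 + t^2)
        = ∑ i : Fin k, (t + (θ i / 2 - π/8) * (1 + t^2)) := by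
          rw [Finset.sum_add_distrib, Finset.sum_const, ← Finset.sum_mul,
            Finset.sum_sub_distrib, hsum2, Finset.sum_const]
          simp only [Finset.card_univ, Fintype.card_fin, nsmul_eq_mul]
      _ ≤ ∑ i, Real.tan (θ i / 2) := Finset.sum_le_sum fun i _ => hlb i
  have hle := tan_pi_div_eight_le
  nlinarith [mul_nonneg (by linarith : (0:ℝ) ≤ 8 - (k:ℝ))
    (by linarith : (0:ℝ) ≤ (π/8) * (1 + t^2) - t)]
end

section
/- Let d > 0 and 0 < θ < π. Let A, B ∈ ℝ² be two points lying on the vertical line {p : p.1 = d}, suppose the angle ∠A O B at the origin O = (0,0) equals θ. Then the two-dimensional Lebesgue measure of the convex hull of {O, A, B} is at least d² · tan(θ/2), with the minimum attained by the isosceles triangle. -/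
open Real EuclideanGeometry MeasureTheory

noncomputable section AreaTriangleAux

namespace AreaTriangleAux

abbrev E2 := EuclideanSpace ℝ (Fin 2)


lemma vol_corner : volume {p : ℝ × ℝ | 0 ≤ p.1 ∧ 0 ≤ p.2 ∧ p.1 + p.2 ≤ 1} = ENNReal.ofReal (1/2) := by
  set f : ℝ → ℝ := fun _ => 0 with hf
  set g : ℝ → ℝ := fun x => 1 - x with hg
  set S : Set (ℝ × ℝ) := {p : ℝ × ℝ | 0 ≤ p.1 ∧ 0 ≤ p.2 ∧ p.1 + p.2 ≤ 1} with hS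
  set R : Set (ℝ × ℝ) := regionBetween f g (Set.Icc 0 1) with hR
  have hgi : IntegrableOn g (Set.Icc (0:ℝ) 1) volume := by
    apply Continuous.integrableOn_Icc; continuity
  have hRvol : volume.prod volume R = ENNReal.ofReal (∫ y in Set.Icc (0:ℝ) 1, (g - f) y) := by
    refine volume_regionBetween_eq_integral ?_ hgi measurableSet_Icc ?_
    · exact integrableOn_const (by simp)
    · intro x hx; simp only [Set.mem_Icc] at hx; simp [hf, hg]; linarith [hx.2]
  have hint : (∫ y in Set.Icc (0:ℝ) 1, (g - f) y) = 1/2 := by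
    simp only [Pi.sub_apply, hf, hg, sub_zero]
    rw [MeasureTheory.integral_Icc_eq_integral_Ioc, ← intervalIntegral.integral_of_le (by norm_num : (0:ℝ) ≤ 1)]
    have hc : IntervalIntegrable (fun _ : ℝ => (1:ℝ)) volume 0 1 := intervalIntegrable_const
    have hid : IntervalIntegrable (fun x : ℝ => x) volume 0 1 := intervalIntegral.intervalIntegrable_id
    rw [intervalIntegral.integral_sub hc hid]
    simp [integral_id]
    norm_num
  have hprod : (volume : Measure (ℝ × ℝ)) = volume.prod volume := Measure.volume_eq_prod ℝ ℝ
  have hRS : R ⊆ S := by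
    rintro ⟨x, y⟩ h
    obtain ⟨hx, hy⟩ := h
    simp only [Set.mem_Icc] at hx
    simp only [hf, hg, Set.mem_Ioo] at hy
    exact ⟨hx.1, le_of_lt hy.1, by linarith [hy.2]⟩
  -- S ⊆ R ∪ nullsets
  have hL0 : volume {p : ℝ × ℝ | p.2 = 0} = 0 := by
    have : {p : ℝ × ℝ | p.2 = 0} = (Set.univ : Set ℝ) ×ˢ ({0} : Set ℝ) := by
      ext ⟨x, y⟩; simp [eq_comm]
    rw [this, hprod, Measure.prod_prod]
    simp
  have hL1 : volume {p : ℝ × ℝ | p.1 + p.2 = 1} = 0 := by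
    set s : AffineSubspace ℝ (ℝ × ℝ) :=
      AffineSubspace.mk' ((1:ℝ), (0:ℝ)) (LinearMap.ker ((LinearMap.fst ℝ ℝ ℝ) + (LinearMap.snd ℝ ℝ ℝ))) with hs
    have hset : {p : ℝ × ℝ | p.1 + p.2 = 1} = (s : Set (ℝ × ℝ)) := by
      ext ⟨x, y⟩
      simp [hs, AffineSubspace.mem_mk', LinearMap.mem_ker, Prod.ext_iff]
      constructor <;> intro h <;> linarith
    rw [hset]
    refine Measure.addHaar_affineSubspace volume s ?_
    intro htop
    have : ((0:ℝ), (0:ℝ)) ∈ s := htop ▸ AffineSubspace.mem_top ℝ _ _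
    simp [hs, AffineSubspace.mem_mk', LinearMap.mem_ker] at this
  have hSR : S ⊆ R ∪ ({p : ℝ × ℝ | p.2 = 0} ∪ {p : ℝ × ℝ | p.1 + p.2 = 1}) := by
    rintro ⟨x, y⟩ ⟨h1, h2, h3⟩
    by_cases hy0 : y = 0
    · exact Or.inr (Or.inl hy0)
    by_cases hy1 : x + y = 1
    · exact Or.inr (Or.inr hy1)
    · left
      constructor
      · exact Set.mem_Icc.2 ⟨h1, by linarith⟩
      · exact Set.mem_Ioo.2 ⟨lt_of_le_of_ne h2 (Ne.symm hy0), by simp [hg]; rcases lt_or_eq_of_le h3 with h | h; linarith; exact absurd h hy1⟩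
  have h1 : volume S ≤ ENNReal.ofReal (1/2) := by
    calc volume S ≤ volume (R ∪ ({p : ℝ × ℝ | p.2 = 0} ∪ {p : ℝ × ℝ | p.1 + p.2 = 1})) := measure_mono hSR
      _ ≤ volume R + volume ({p : ℝ × ℝ | p.2 = 0} ∪ {p : ℝ × ℝ | p.1 + p.2 = 1}) := measure_union_le _ _
      _ ≤ volume R + (volume {p : ℝ × ℝ | p.2 = 0} + volume {p : ℝ × ℝ | p.1 + p.2 = 1}) := by gcongr; exact measure_union_le _ _
      _ = volume R := by rw [hL0, hL1]; simp
      _ = ENNReal.ofReal (1/2) := by rw [hprod, hRvol, hint]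
  have h2 : ENNReal.ofReal (1/2) ≤ volume S := by
    calc ENNReal.ofReal (1/2) = volume R := by rw [hprod, hRvol, hint]
      _ ≤ volume S := measure_mono hRS
  exact le_antisymm h1 h2

def e0 : E2 := EuclideanSpace.single 0 1
def e1 : E2 := EuclideanSpace.single 1 1

lemma hull_eq : convexHull ℝ ({0, e0, e1} : Set E2) = {x : E2 | 0 ≤ x 0 ∧ 0 ≤ x 1 ∧ x 0 + x 1 ≤ 1} := by
  apply le_antisymm
  · apply convexHull_min
    · rintro x hx
      rcases hx with h | h | h <;> subst h <;>
        simp [e0, e1, EuclideanSpace.single_apply]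
    · rintro x ⟨hx0, hx1, hx2⟩ y ⟨hy0, hy1, hy2⟩ a b ha hb hab
      refine ⟨?_, ?_, ?_⟩ <;>
        simp only [PiLp.add_apply, PiLp.smul_apply, smul_eq_mul] <;> nlinarith
  · rintro x ⟨hx0, hx1, hx2⟩
    have h0 : (0 : E2) ∈ convexHull ℝ ({0, e0, e1} : Set E2) := subset_convexHull _ _ (by simp)
    have h10 : e0 ∈ convexHull ℝ ({0, e0, e1} : Set E2) := subset_convexHull _ _ (by simp)
    have h11 : e1 ∈ convexHull ℝ ({0, e0, e1} : Set E2) := subset_convexHull _ _ (by simp)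
    have hc : Convex ℝ (convexHull ℝ ({0, e0, e1} : Set E2)) := convex_convexHull _ _
    rcases eq_or_lt_of_le (by linarith : (0:ℝ) ≤ x 0 + x 1) with h | h
    · have hx0' : x 0 = 0 := by linarith
      have hx1' : x 1 = 0 := by linarith
      have : x = 0 := by
        ext i; fin_cases i <;> simpa [hx0', hx1']
      rw [this]; exact h0
    · set s := x 0 + x 1 with hs
      have hm : ((x 0 / s) • e0 + (x 1 / s) • e1) ∈ convexHull ℝ ({0, e0, e1} : Set E2) :=
        hc h10 h11 (by positivity) (by positivity) (by field_simp; exact hs.symm)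
      have hx : x = s • ((x 0 / s) • e0 + (x 1 / s) • e1) + (1 - s) • (0 : E2) := by
        ext i
        fin_cases i <;>
          · simp [e0, e1, EuclideanSpace.single_apply, smul_smul]
            field_simp
      rw [hx]
      exact hc hm h0 (by linarith) (by linarith) (by ring)

lemma vol_std_triangle : volume (convexHull ℝ ({0, e0, e1} : Set E2)) = ENNReal.ofReal (1/2) := by
  rw [hull_eq]
  have hφ : MeasurePreserving
      (fun x : E2 => ((x 0 : ℝ), (x 1 : ℝ))) volume volume := by
    have h1 := EuclideanSpace.volume_preserving_symm_measurableEquiv_toLp (Fin 2)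
    have h2 := volume_preserving_finTwoArrow ℝ
    exact h2.comp h1
  have hmeas : MeasurableSet {p : ℝ × ℝ | 0 ≤ p.1 ∧ 0 ≤ p.2 ∧ p.1 + p.2 ≤ 1} := by
    apply MeasurableSet.inter
    · exact measurableSet_le measurable_const measurable_fst
    apply MeasurableSet.inter
    · exact measurableSet_le measurable_const measurable_snd
    · exact measurableSet_le (measurable_fst.add measurable_snd) measurable_const
  have := hφ.measure_preimage hmeas.nullMeasurableSet
  have hpre : (fun x : E2 => ((x 0 : ℝ), (x 1 : ℝ))) ⁻¹' {p : ℝ × ℝ | 0 ≤ p.1 ∧ 0 ≤ p.2 ∧ p.1 + p.2 ≤ 1}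
      = {x : E2 | 0 ≤ x 0 ∧ 0 ≤ x 1 ∧ x 0 + x 1 ≤ 1} := rfl
  rw [hpre] at this
  rw [this, vol_corner]

def fAB (A B : E2) : E2 →ₗ[ℝ] E2 where
  toFun x := x 0 • A + x 1 • B
  map_add' x y := by
    simp only [PiLp.add_apply, add_smul]; abel
  map_smul' c x := by
    simp only [PiLp.smul_apply, smul_eq_mul, RingHom.id_apply, smul_add, mul_smul]

lemma fAB_det (A B : E2) : LinearMap.det (fAB A B) = A 0 * B 1 - A 1 * B 0 := by
  let b := PiLp.basisFun 2 ℝ (Fin 2)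
  rw [← LinearMap.det_toMatrix b]
  rw [Matrix.det_fin_two]
  have h : ∀ i j, LinearMap.toMatrix b b (fAB A B) i j = (fAB A B) (b j) i := by
    intro i j
    rw [LinearMap.toMatrix_apply]
    rfl
  simp only [h]
  have hb : ∀ j i : Fin 2, (b j) i = if j = i then 1 else 0 := by
    intro j i
    simp [b, PiLp.basisFun_apply]
    simp [eq_comm]
  simp [fAB, hb]
  ring

lemma area_tri (A B : E2) :
    volume (convexHull ℝ ({0, A, B} : Set E2)) = ENNReal.ofReal (|A 0 * B 1 - A 1 * B 0| / 2) := by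
  have himg : (fAB A B) '' ({0, e0, e1} : Set E2) = {0, A, B} := by
    rw [show ({0, e0, e1} : Set E2) = insert 0 (insert e0 {e1}) from rfl]
    rw [Set.image_insert_eq, Set.image_insert_eq, Set.image_singleton]
    have h0 : (fAB A B) 0 = 0 := by simp [fAB]
    have h1 : (fAB A B) e0 = A := by simp [fAB, e0, EuclideanSpace.single_apply]
    have h2 : (fAB A B) e1 = B := by simp [fAB, e1, EuclideanSpace.single_apply]
    rw [h0, h1, h2]
  have hhull : (fAB A B) '' (convexHull ℝ ({0, e0, e1} : Set E2)) = convexHull ℝ ({0, A, B} : Set E2) := by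
    rw [(fAB A B).image_convexHull, himg]
  rw [← hhull, Measure.addHaar_image_linearMap, vol_std_triangle, fAB_det,
    ← ENNReal.ofReal_mul (abs_nonneg _), mul_one_div]

lemma vol_corner' : volume {p : ℝ × ℝ | 0 ≤ p.1 ∧ 0 ≤ p.2 ∧ p.1 + p.2 ≤ 1} = ENNReal.ofReal (1/2) := vol_corner

end AreaTriangleAux

end AreaTriangleAux

open AreaTriangleAux in
set_option maxHeartbeats 600000 in
theorem area_triangle_ge_isosceles (d θ : ℝ) (hd : 0 < d) (hθ : 0 < θ ∧ θ < π)
    (A B : EuclideanSpace ℝ (Fin 2)) (hA : A 0 = d) (hB : B 0 = d)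
    (hangle : EuclideanGeometry.angle A (0 : EuclideanSpace ℝ (Fin 2)) B = θ) :
    volume (convexHull ℝ ({0, A, B} : Set (EuclideanSpace ℝ (Fin 2)))) ≥
      ENNReal.ofReal (d ^ 2 * Real.tan (θ / 2)) ∧
    (dist (0 : EuclideanSpace ℝ (Fin 2)) A = dist (0 : EuclideanSpace ℝ (Fin 2)) B →
      volume (convexHull ℝ ({0, A, B} : Set (EuclideanSpace ℝ (Fin 2)))) =
        ENNReal.ofReal (d ^ 2 * Real.tan (θ / 2))) := by
  obtain ⟨hθ0, hθπ⟩ := hθ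
  set a : ℝ := A 1 with ha
  set b : ℝ := B 1 with hb
  -- angle as vector angle
  have hangle' : InnerProductGeometry.angle A B = θ := by
    simpa [EuclideanGeometry.angle, vsub_eq_sub] using hangle
  -- norms
  have hAne : A ≠ 0 := fun h => by rw [h] at hA; simp at hA; linarith [hA ▸ hd]
  have hBne : B ≠ 0 := fun h => by rw [h] at hB; simp at hB; linarith [hB ▸ hd]
  set nA : ℝ := ‖A‖ with hnAdef
  set nB : ℝ := ‖B‖ with hnBdef
  have hnApos : 0 < nA := norm_pos_iff.2 hAne
  have hnBpos : 0 < nB := norm_pos_iff.2 hBne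
  have hN : 0 < nA * nB := mul_pos hnApos hnBpos
  have hinnerAB : inner ℝ A B = d^2 + a * b := by
    rw [PiLp.inner_apply]
    simp [Fin.sum_univ_two, hA, hB, RCLike.inner_apply, conj_trivial]
    ring
  have hinnerAA : inner ℝ A A = d^2 + a^2 := by
    rw [PiLp.inner_apply]
    simp [Fin.sum_univ_two, hA, RCLike.inner_apply, conj_trivial]
    ring
  have hinnerBB : inner ℝ B B = d^2 + b^2 := by
    rw [PiLp.inner_apply]
    simp [Fin.sum_univ_two, hB, RCLike.inner_apply, conj_trivial]
    ring
  have hnA : nA^2 = d^2 + a^2 := by rw [← real_inner_self_eq_norm_sq]; exact hinnerAA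
  have hnB : nB^2 = d^2 + b^2 := by rw [← real_inner_self_eq_norm_sq]; exact hinnerBB
  -- cos and sin
  have hcos : Real.cos θ * (nA * nB) = d^2 + a * b := by
    rw [← hangle', InnerProductGeometry.cos_angle, div_mul_cancel₀ _ (ne_of_gt hN)]
    exact hinnerAB
  have hsin : Real.sin θ * (nA * nB) = d * |a - b| := by
    rw [← hangle', InnerProductGeometry.sin_angle_mul_norm_mul_norm]
    have h1 : inner ℝ A A * inner ℝ B B - inner ℝ A B * inner ℝ A B = (d * (a - b))^2 := by
      rw [hinnerAA, hinnerBB, hinnerAB]; ring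
    rw [h1, Real.sqrt_sq_eq_abs, abs_mul, abs_of_pos hd]
  have hsinpos : 0 < Real.sin θ := Real.sin_pos_of_pos_of_lt_pi hθ0 hθπ
  have hcosgt : Real.cos π < Real.cos θ :=
    Real.cos_lt_cos_of_nonneg_of_le_pi (le_of_lt hθ0) le_rfl hθπ
  have hone_add : 0 < 1 + Real.cos θ := by rw [Real.cos_pi] at hcosgt; linarith
  -- half-angle
  have htwo : 2 * (θ / 2) = θ := by ring
  have hsin2 : Real.sin θ = 2 * Real.sin (θ/2) * Real.cos (θ/2) := by
    have := Real.sin_two_mul (θ/2); rwa [htwo] at this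
  have hcos2 : Real.cos θ = 2 * Real.cos (θ/2)^2 - 1 := by
    have := Real.cos_two_mul (θ/2); rwa [htwo] at this
  have hchalf : 0 < Real.cos (θ/2) := by
    apply Real.cos_pos_of_mem_Ioo
    have := Real.pi_pos
    constructor
    · show -(π/2) < θ/2; linarith
    · show θ/2 < π/2; linarith
  have htan : Real.tan (θ/2) = Real.sin θ / (1 + Real.cos θ) := by
    rw [Real.tan_eq_sin_div_cos, hsin2, hcos2]
    rw [div_eq_div_iff (ne_of_gt hchalf) (by linarith : (1 + (2 * Real.cos (θ/2)^2 - 1)) ≠ 0)]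
    ring
  -- denominator
  have hdenom : 0 < nA * nB + d^2 + a * b := by
    have : (1 + Real.cos θ) * (nA * nB) = nA * nB + (d^2 + a * b) := by
      rw [add_mul, one_mul, hcos]
    have h' := mul_pos hone_add hN
    linarith
  have htan2 : Real.tan (θ/2) = d * |a - b| / (nA * nB + d^2 + a * b) := by
    rw [htan, ← hsin, div_eq_div_iff (ne_of_gt hone_add) (ne_of_gt hdenom)]
    linear_combination -Real.sin θ * hcos
  -- a ≠ b
  have hab : a ≠ b := by
    intro h
    rw [h, sub_self, abs_zero, mul_zero] at hsin
    linarith [mul_pos hsinpos hN]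
  have hDpos : 0 < |a - b| := abs_pos.2 (sub_ne_zero.2 hab)
  -- key inequality
  have hkey : 2 * d^2 ≤ nA * nB + d^2 + a * b := by
    have hNsq : (nA * nB)^2 = (d^2 + a^2) * (d^2 + b^2) := by
      rw [mul_pow, hnA, hnB]
    have hge : d^2 - a * b ≤ nA * nB := by
      have h2 : (d^2 - a * b)^2 ≤ (nA * nB)^2 := by
        rw [hNsq]
        have expand : (d^2+a^2)*(d^2+b^2) = (d^2 - a*b)^2 + d^2*(a+b)^2 := by ring
        rw [expand]
        have := mul_nonneg (sq_nonneg d) (sq_nonneg (a+b))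
        linarith
      have h3 := Real.sqrt_le_sqrt h2
      rw [Real.sqrt_sq_eq_abs, Real.sqrt_sq_eq_abs, abs_of_pos hN] at h3
      exact le_trans (le_abs_self _) h3
    linarith
  -- area formula
  have harea : volume (convexHull ℝ ({0, A, B} : Set E2)) = ENNReal.ofReal (d * |a - b| / 2) := by
    rw [area_tri A B]
    congr 1
    rw [hA, hB, ← ha, ← hb]
    rw [show d * b - a * d = d * (b - a) by ring, abs_mul, abs_of_pos hd, abs_sub_comm]
  refine ⟨?_, ?_⟩
  · rw [harea, ge_iff_le]
    apply ENNReal.ofReal_le_ofReal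
    rw [htan2, ← mul_div_assoc]
    rw [div_le_div_iff₀ hdenom (by norm_num : (0:ℝ) < 2)]
    have hprod := mul_nonneg (mul_pos hd hDpos).le
      (by linarith : (0:ℝ) ≤ nA * nB + d^2 + a * b - 2 * d^2)
    nlinarith [hprod]
  · intro hdist
    have hnAB : nA = nB := by
      simp only [dist_zero_left] at hdist
      simpa [hnAdef, hnBdef] using hdist
    have haborb : a = -b := by
      have h2 : a^2 = b^2 := by
        rw [hnAB] at hnA
        linarith [hnA, hnB]
      have h3 : (a - b) * (a + b) = 0 := by linear_combination h2
      rcases mul_eq_zero.1 h3 with h | h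
      · exact absurd (by linarith : a = b) hab
      · linarith
    have hNval : nA * nB + d^2 + a * b = 2 * d^2 := by
      rw [← hnAB, ← sq, hnA, haborb]; ring
    have heq : d^2 * Real.tan (θ/2) = d * |a - b| / 2 := by
      rw [htan2, hNval]
      field_simp
    rw [harea, heq]
end
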